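/- Let P and P' be transition probability kernels on ℝ^d such that for every f ∈ Lip₁, Pf is l(P)-Lipschitz and P'f is l(P')-Lipschitz. For μ ∈ P(ℝ^d), α ∈ (0,1), define R_μ^α(x,·) = (1−α)P(x,·) + α (μP')(·). Then for probabilities η, η' with finite first moment and μ, μ' with finite first moment, W₁(η R_μ^α, η' R_{μ'}^α) ≤ (1−α) l(P) W₁(η, η') + α l(P') W₁(μ, μ'). -/

import Mathlib

open MeasureTheory ProbabilityTheory
open scoped NNReal

/-- Wasserstein-1 distance via Kantorovich-Rubinstein duality. -/
noncomputable def W1 {d : ℕ} (μ ν : Measure (EuclideanSpace ℝ (Fin d))) : ℝ :=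
  sSup {r | ∃ f : EuclideanSpace ℝ (Fin d) → ℝ,
    LipschitzWith 1 f ∧ r = |(∫ x, f x ∂μ) - ∫ x, f x ∂ν|}

variable {d : ℕ}
local notation "X" => EuclideanSpace ℝ (Fin d)

lemma aux_integrable {K : ℝ≥0} {f : X → ℝ} (hf : LipschitzWith K f)
    (ρ : Measure X) [IsProbabilityMeasure ρ] (hρ : Integrable (fun x => ‖x‖) ρ) :
    Integrable f ρ := by
  refine Integrable.mono' ((integrable_const |f 0|).add (hρ.const_mul (K : ℝ)))
    hf.continuous.aestronglyMeasurable ?_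
  filter_upwards with x
  have h1 : |f x - f 0| ≤ (K : ℝ) * ‖x‖ := by
    have := hf.dist_le_mul x 0
    rwa [Real.dist_eq, dist_zero_right] at this
  rw [Real.norm_eq_abs]
  calc |f x| = |f 0 + (f x - f 0)| := by ring_nf
  _ ≤ |f 0| + |f x - f 0| := abs_add_le _ _
  _ ≤ |f 0| + (K : ℝ) * ‖x‖ := by linarith

lemma aux_center (ρ : Measure X) [IsProbabilityMeasure ρ] (hρ : Integrable (fun x => ‖x‖) ρ)
    {f : X → ℝ} (hf : LipschitzWith 1 f) :
    |(∫ x, f x ∂ρ) - f 0| ≤ ∫ x, ‖x‖ ∂ρ := by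
  have hfi : Integrable f ρ := aux_integrable hf ρ hρ
  have h1 : (∫ x, f x ∂ρ) - f 0 = ∫ x, (f x - f 0) ∂ρ := by
    rw [integral_sub hfi (integrable_const _), integral_const]; simp
  rw [h1]
  have h2 : |∫ x, (f x - f 0) ∂ρ| ≤ ∫ x, |f x - f 0| ∂ρ := by
    simpa [Real.norm_eq_abs] using
      norm_integral_le_integral_norm (μ := ρ) (f := fun x => f x - f 0)
  refine h2.trans (integral_mono (hfi.sub (integrable_const _)).abs hρ ?_)
  intro x
  have := hf.dist_le_mul x 0
  rwa [Real.dist_eq, dist_zero_right, NNReal.coe_one, one_mul] at this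

lemma aux_bdd (η η' : Measure X) [IsProbabilityMeasure η] [IsProbabilityMeasure η']
    (hη : Integrable (fun x => ‖x‖) η) (hη' : Integrable (fun x => ‖x‖) η') :
    BddAbove {r | ∃ f : X → ℝ, LipschitzWith 1 f ∧ r = |(∫ x, f x ∂η) - ∫ x, f x ∂η'|} := by
  refine ⟨(∫ x, ‖x‖ ∂η) + ∫ x, ‖x‖ ∂η', ?_⟩
  rintro r ⟨f, hf, rfl⟩
  have h1 := aux_center η hη hf
  have h2 := aux_center η' hη' hf
  have := abs_sub_le (∫ x, f x ∂η) (f 0) (∫ x, f x ∂η')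
  rw [abs_sub_comm (f 0)] at this
  linarith

lemma aux_W1_nonneg (η η' : Measure X) [IsProbabilityMeasure η] [IsProbabilityMeasure η']
    (hη : Integrable (fun x => ‖x‖) η) (hη' : Integrable (fun x => ‖x‖) η') :
    0 ≤ W1 η η' := by
  rw [W1]
  refine le_csSup (aux_bdd η η' hη hη') ⟨fun _ => 0, ?_, by simp⟩
  exact (LipschitzWith.const 0).weaken zero_le_one

lemma aux_dual (K : ℝ≥0) {g : X → ℝ} (hg : LipschitzWith K g)
    (η η' : Measure X) [IsProbabilityMeasure η] [IsProbabilityMeasure η']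
    (hη : Integrable (fun x => ‖x‖) η) (hη' : Integrable (fun x => ‖x‖) η') :
    |(∫ x, g x ∂η) - ∫ x, g x ∂η'| ≤ K * W1 η η' := by
  rcases eq_or_ne K 0 with rfl | hK
  · have hc : ∀ x, g x = g 0 := fun x => by
      have := hg.dist_le_mul x 0
      simp only [NNReal.coe_zero, zero_mul] at this
      exact dist_le_zero.mp this
    have : (fun x : X => g x) = fun _ => g 0 := funext hc
    rw [this]
    simp
  · have hKpos : (0 : ℝ) < K := NNReal.coe_pos.mpr (zero_lt_iff.mpr hK)
    set f : X → ℝ := fun x => (K : ℝ)⁻¹ * g x with hfdef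
    have hf : LipschitzWith 1 f := LipschitzWith.of_dist_le_mul fun x y => by
      have h := hg.dist_le_mul x y
      rw [Real.dist_eq] at h ⊢
      calc |f x - f y| = (K : ℝ)⁻¹ * |g x - g y| := by
            rw [hfdef, ← mul_sub, abs_mul, abs_of_nonneg (inv_nonneg.2 hKpos.le)]
      _ ≤ (K : ℝ)⁻¹ * ((K : ℝ) * dist x y) := by
            exact mul_le_mul_of_nonneg_left h (inv_nonneg.2 hKpos.le)
      _ = 1 * dist x y := by field_simp
    have hmem : |(∫ x, f x ∂η) - ∫ x, f x ∂η'| ≤ W1 η η' := by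
      rw [W1]; exact le_csSup (aux_bdd η η' hη hη') ⟨f, hf, rfl⟩
    have hint : ∀ ρ : Measure X, ∫ x, f x ∂ρ = (K : ℝ)⁻¹ * ∫ x, g x ∂ρ := fun ρ =>
      integral_const_mul _ _
    have key : |(∫ x, g x ∂η) - ∫ x, g x ∂η'| = (K : ℝ) * |(∫ x, f x ∂η) - ∫ x, f x ∂η'| := by
      rw [hint, hint, ← mul_sub, abs_mul, abs_of_nonneg (inv_nonneg.2 hKpos.le),
        ← mul_assoc, mul_inv_cancel₀ hKpos.ne', one_mul]
    rw [key]
    exact mul_le_mul_of_nonneg_left hmem hKpos.le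

lemma aux_bind_eq (η : Measure X) [SFinite η] (P : Kernel X X) [IsSFiniteKernel P] :
    η.bind (fun x => P x) = (η ⊗ₘ P).map Prod.snd := by
  ext s hs
  rw [Measure.bind_apply hs (P.measurable.aemeasurable), Measure.map_apply measurable_snd hs,
    Measure.compProd_apply (measurable_snd hs)]
  rfl

lemma aux_integrable_bind_iff (η : Measure X) [SFinite η] (P : Kernel X X) [IsSFiniteKernel P]
    {f : X → ℝ} (hfc : Continuous f) :
    Integrable f (η.bind (fun x => P x)) ↔
      Integrable (fun p : X × X => f p.2) (η ⊗ₘ P) := by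
  rw [aux_bind_eq]
  exact integrable_map_measure hfc.aestronglyMeasurable measurable_snd.aemeasurable

lemma aux_integral_bind (η : Measure X) [SFinite η] (P : Kernel X X) [IsSFiniteKernel P]
    {f : X → ℝ} (hfc : Continuous f) (h : Integrable f (η.bind (fun x => P x))) :
    ∫ y, f y ∂(η.bind (fun x => P x)) = ∫ x, ∫ y, f y ∂(P x) ∂η := by
  rw [aux_bind_eq, integral_map measurable_snd.aemeasurable hfc.aestronglyMeasurable]
  have h' : Integrable (fun p : X × X => f p.2) (η ⊗ₘ P) :=
    (aux_integrable_bind_iff η P hfc).mp h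
  exact Measure.integral_compProd h'

lemma aux_integrable_indep (P : Kernel X X) [IsMarkovKernel P] (lP : ℝ≥0)
    (hP : ∀ f : X → ℝ, LipschitzWith 1 f → LipschitzWith lP (fun x => ∫ y, f y ∂(P x)))
    {f : X → ℝ} (hf : LipschitzWith 1 f) {x₀ : X} (h0 : Integrable f (P x₀)) (x : X) :
    Integrable f (P x) := by
  set g : ℕ → X → ℝ := fun n y => min |f y| n with hgdef
  have habs : LipschitzWith 1 (fun y => |f y|) := by
    simpa [Real.norm_eq_abs, Function.comp_def] using lipschitzWith_one_norm.comp hf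
  have hg1 : ∀ n : ℕ, LipschitzWith 1 (g n) := fun n => by
    simpa using habs.min (LipschitzWith.const (n : ℝ))
  have hgnn : ∀ n y, 0 ≤ g n y := fun n y => le_min (abs_nonneg _) (Nat.cast_nonneg n)
  have hgint : ∀ (n : ℕ) (z : X), Integrable (g n) (P z) := fun n z => by
    refine Integrable.mono' (integrable_const (n : ℝ))
      ((hg1 n).continuous.aestronglyMeasurable) ?_
    filter_upwards with y
    rw [Real.norm_eq_abs, abs_of_nonneg (hgnn n y)]
    exact min_le_right _ _
  have hGlip : ∀ n : ℕ, LipschitzWith lP (fun z => ∫ y, g n y ∂(P z)) := fun n => hP _ (hg1 n)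
  set C : ℝ := (∫ y, |f y| ∂(P x₀)) + lP * dist x x₀ with hCdef
  have hbound : ∀ n : ℕ, (∫ y, g n y ∂(P x)) ≤ C := by
    intro n
    have h1 : (∫ y, g n y ∂(P x)) - (∫ y, g n y ∂(P x₀)) ≤ (lP : ℝ) * dist x x₀ := by
      have := (hGlip n).dist_le_mul x x₀
      rw [Real.dist_eq] at this
      exact (le_abs_self _).trans this
    have h2 : (∫ y, g n y ∂(P x₀)) ≤ ∫ y, |f y| ∂(P x₀) :=
      integral_mono (hgint n x₀) h0.abs fun y => min_le_left _ _
    rw [hCdef]; linarith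
  refine ⟨hf.continuous.aestronglyMeasurable, ?_⟩
  have hsup : ∀ y : X, (‖f y‖₊ : ENNReal) = ⨆ n : ℕ, ENNReal.ofReal (g n y) := by
    intro y
    rw [← enorm_eq_nnnorm, ← ofReal_norm, Real.norm_eq_abs]
    refine le_antisymm ?_ (iSup_le fun n => ENNReal.ofReal_le_ofReal (min_le_left _ _))
    refine le_iSup_of_le ⌈|f y|⌉₊ (le_of_eq ?_)
    have hle : |f y| ≤ ((⌈|f y|⌉₊ : ℕ) : ℝ) := Nat.le_ceil _
    rw [hgdef]
    simp only [min_eq_left hle]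
  have hmono : Monotone fun (n : ℕ) (y : X) => ENNReal.ofReal (g n y) := by
    intro n m hnm
    intro y
    exact ENNReal.ofReal_le_ofReal (min_le_min le_rfl (Nat.cast_le.mpr hnm))
  rw [HasFiniteIntegral]
  calc ∫⁻ y, ‖f y‖₊ ∂(P x) = ∫⁻ y, ⨆ n : ℕ, ENNReal.ofReal (g n y) ∂(P x) := by
        congr 1; funext y; exact hsup y
  _ = ⨆ n : ℕ, ∫⁻ y, ENNReal.ofReal (g n y) ∂(P x) :=
        lintegral_iSup (fun n => ((hg1 n).continuous.measurable).ennreal_ofReal)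
          fun n m hnm => fun y => hmono hnm y
  _ ≤ ENNReal.ofReal C := by
        refine iSup_le fun n => ?_
        rw [← ofReal_integral_eq_lintegral_ofReal (hgint n x)
          (Filter.Eventually.of_forall (hgnn n))]
        exact ENNReal.ofReal_le_ofReal (hbound n)
  _ < ⊤ := ENNReal.ofReal_lt_top

lemma aux_transfer (P : Kernel X X) [IsMarkovKernel P] (lP : ℝ≥0)
    (hP : ∀ f : X → ℝ, LipschitzWith 1 f → LipschitzWith lP (fun x => ∫ y, f y ∂(P x)))
    (η η' : Measure X) [IsProbabilityMeasure η] [IsProbabilityMeasure η']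
    (hη' : Integrable (fun x => ‖x‖) η')
    {f : X → ℝ} (hf : LipschitzWith 1 f)
    (h : Integrable f (η.bind (fun x => P x))) :
    Integrable f (η'.bind (fun x => P x)) := by
  rw [aux_integrable_bind_iff _ _ hf.continuous] at h ⊢
  have hm : ∀ (ρ : Measure X), AEStronglyMeasurable (fun p : X × X => f p.2) (ρ ⊗ₘ P) :=
    fun ρ => (hf.continuous.comp continuous_snd).aestronglyMeasurable
  rw [Measure.integrable_compProd_iff (hm η)] at h
  rw [Measure.integrable_compProd_iff (hm η')]
  obtain ⟨h1, _⟩ := h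
  obtain ⟨x₀, hx₀⟩ := h1.exists
  refine ⟨Filter.Eventually.of_forall fun x => aux_integrable_indep P lP hP hf hx₀ x, ?_⟩
  have habs : LipschitzWith 1 (fun y => |f y|) := by
    simpa [Real.norm_eq_abs, Function.comp_def] using lipschitzWith_one_norm.comp hf
  have := hP _ habs
  simp only [Real.norm_eq_abs]
  exact aux_integrable this η' hη'

/-- One-step contraction for the chemical-field update kernel
    `R_μ^α = (1-α) P + α μP'`. -/
theorem stmt13 (d : ℕ)
    (P P' : Kernel (EuclideanSpace ℝ (Fin d)) (EuclideanSpace ℝ (Fin d)))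
    [IsMarkovKernel P] [IsMarkovKernel P'] (lP lP' : ℝ≥0)
    (hP : ∀ f : EuclideanSpace ℝ (Fin d) → ℝ, LipschitzWith 1 f →
      LipschitzWith lP (fun x => ∫ y, f y ∂(P x)))
    (hP' : ∀ f : EuclideanSpace ℝ (Fin d) → ℝ, LipschitzWith 1 f →
      LipschitzWith lP' (fun x => ∫ y, f y ∂(P' x)))
    (α : ℝ) (hα : α ∈ Set.Ioo (0 : ℝ) 1)
    (η η' μ μ' : Measure (EuclideanSpace ℝ (Fin d)))
    [IsProbabilityMeasure η] [IsProbabilityMeasure η']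
    [IsProbabilityMeasure μ] [IsProbabilityMeasure μ']
    (hη : Integrable (fun x => ‖x‖) η) (hη' : Integrable (fun x => ‖x‖) η')
    (hμ : Integrable (fun x => ‖x‖) μ) (hμ' : Integrable (fun x => ‖x‖) μ') :
    W1 (ENNReal.ofReal (1 - α) • η.bind (fun x => P x)
          + ENNReal.ofReal α • μ.bind (fun x => P' x))
       (ENNReal.ofReal (1 - α) • η'.bind (fun x => P x)
          + ENNReal.ofReal α • μ'.bind (fun x => P' x))
      ≤ (1 - α) * lP * W1 η η' + α * lP' * W1 μ μ' := by
  obtain ⟨hα0, hα1⟩ := hα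
  have h1α : (0 : ℝ) ≤ 1 - α := by linarith
  have hc1ne : ENNReal.ofReal (1 - α) ≠ 0 := by
    simp only [ne_eq, ENNReal.ofReal_eq_zero, not_le]; linarith
  have hc2ne : ENNReal.ofReal α ≠ 0 := by
    simp only [ne_eq, ENNReal.ofReal_eq_zero, not_le]; linarith
  have hW1 := aux_W1_nonneg η η' hη hη'
  have hW2 := aux_W1_nonneg μ μ' hμ hμ'
  have hRHS : 0 ≤ (1 - α) * lP * W1 η η' + α * lP' * W1 μ μ' := by
    have h1 : 0 ≤ (1 - α) * lP * W1 η η' :=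
      mul_nonneg (mul_nonneg h1α lP.coe_nonneg) hW1
    have h2 : 0 ≤ α * lP' * W1 μ μ' :=
      mul_nonneg (mul_nonneg hα0.le lP'.coe_nonneg) hW2
    linarith
  rw [W1]
  refine Real.sSup_le ?_ hRHS
  rintro r ⟨f, hf, rfl⟩
  by_cases hAB : Integrable f (η.bind (fun x => P x)) ∧ Integrable f (μ.bind (fun x => P' x))
  · obtain ⟨hA, hB⟩ := hAB
    have hA' : Integrable f (η'.bind (fun x => P x)) := aux_transfer P lP hP η η' hη' hf hA
    have hB' : Integrable f (μ'.bind (fun x => P' x)) := aux_transfer P' lP' hP' μ μ' hμ' hf hB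
    have e1 : ∀ (ρ₁ ρ₂ : Measure (EuclideanSpace ℝ (Fin d))),
        Integrable f ρ₁ → Integrable f ρ₂ →
        ∫ x, f x ∂(ENNReal.ofReal (1 - α) • ρ₁ + ENNReal.ofReal α • ρ₂)
          = (1 - α) * (∫ x, f x ∂ρ₁) + α * (∫ x, f x ∂ρ₂) := by
      intro ρ₁ ρ₂ h₁ h₂
      rw [integral_add_measure (h₁.smul_measure ENNReal.ofReal_ne_top)
          (h₂.smul_measure ENNReal.ofReal_ne_top),
        integral_smul_measure, integral_smul_measure, ENNReal.toReal_ofReal h1α,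
        ENNReal.toReal_ofReal hα0.le, smul_eq_mul, smul_eq_mul]
    rw [e1 _ _ hA hB, e1 _ _ hA' hB',
      aux_integral_bind η P hf.continuous hA, aux_integral_bind η' P hf.continuous hA',
      aux_integral_bind μ P' hf.continuous hB, aux_integral_bind μ' P' hf.continuous hB']
    set IA := ∫ x, ∫ y, f y ∂(P x) ∂η with hIA
    set IA' := ∫ x, ∫ y, f y ∂(P x) ∂η' with hIA'
    set IB := ∫ x, ∫ y, f y ∂(P' x) ∂μ with hIB
    set IB' := ∫ x, ∫ y, f y ∂(P' x) ∂μ' with hIB'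
    have hdA : |IA - IA'| ≤ (lP : ℝ) * W1 η η' := aux_dual lP (hP f hf) η η' hη hη'
    have hdB : |IB - IB'| ≤ (lP' : ℝ) * W1 μ μ' := aux_dual lP' (hP' f hf) μ μ' hμ hμ'
    have step : |(1 - α) * IA + α * IB - ((1 - α) * IA' + α * IB')|
        ≤ (1 - α) * |IA - IA'| + α * |IB - IB'| := by
      have hrw : (1 - α) * IA + α * IB - ((1 - α) * IA' + α * IB')
          = (1 - α) * (IA - IA') + α * (IB - IB') := by ring
      rw [hrw]
      refine (abs_add_le _ _).trans ?_
      rw [abs_mul, abs_mul, abs_of_nonneg h1α, abs_of_nonneg hα0.le]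
    refine step.trans ?_
    rw [mul_assoc, mul_assoc]
    exact add_le_add (mul_le_mul_of_nonneg_left hdA h1α)
      (mul_le_mul_of_nonneg_left hdB hα0.le)
  · have hnM : ¬ Integrable f (ENNReal.ofReal (1 - α) • η.bind (fun x => P x)
        + ENNReal.ofReal α • μ.bind (fun x => P' x)) := by
      rw [integrable_add_measure]
      rintro ⟨h1, h2⟩
      exact hAB ⟨(integrable_smul_measure hc1ne ENNReal.ofReal_ne_top).mp h1,
        (integrable_smul_measure hc2ne ENNReal.ofReal_ne_top).mp h2⟩
    have hnM' : ¬ Integrable f (ENNReal.ofReal (1 - α) • η'.bind (fun x => P x)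
        + ENNReal.ofReal α • μ'.bind (fun x => P' x)) := by
      rw [integrable_add_measure]
      rintro ⟨h1, h2⟩
      refine hAB ⟨aux_transfer P lP hP η' η hη hf
          ((integrable_smul_measure hc1ne ENNReal.ofReal_ne_top).mp h1),
        aux_transfer P' lP' hP' μ' μ hμ hf
          ((integrable_smul_measure hc2ne ENNReal.ofReal_ne_top).mp h2)⟩
    rw [integral_undef hnM, integral_undef hnM']
    simpa using hRHS
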